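/- (Schlichting's theorem) Let G be a group and 𝔉 a nonempty family of subgroups of G such that there exists n < ω with [F : F ∩ F'] ≤ n for all F, F' ∈ 𝔉. Then there is a subgroup N of G that is commensurable with every member of 𝔉, with the indices [N : N ∩ F] and [F : N ∩ F] bounded independently of F ∈ 𝔉, and such that N is invariant under every automorphism of G that stabilizes 𝔉 setwise. -/

import Mathlib

open Subgroup Pointwise

namespace SchlichtingAux

variable {G : Type*} [Group G]

theorem relindex_triangle {A B K : Subgroup G} (hBA : B.relIndex A ≠ 0)
    (hKB : K.relIndex B ≠ 0) :
    K.relIndex A ≤ K.relIndex B * B.relIndex A ∧ K.relIndex A ≠ 0 := by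
  have h1 : K.relIndex (B ⊓ A) ≠ 0 := by
    intro h
    exact hKB (Subgroup.relIndex_eq_zero_of_le_right inf_le_left h)
  have h2 : (K ⊓ B).relIndex A ≠ 0 := by
    rw [← Subgroup.relIndex_inf_mul_relIndex]
    exact mul_ne_zero h1 hBA
  refine ⟨?_, Subgroup.relIndex_ne_zero_trans hKB hBA⟩
  calc K.relIndex A ≤ (K ⊓ B).relIndex A :=
        Subgroup.relIndex_le_of_le_left inf_le_left h2
    _ = K.relIndex (B ⊓ A) * B.relIndex A := (Subgroup.relIndex_inf_mul_relIndex K B A).symm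
    _ ≤ K.relIndex B * B.relIndex A :=
        Nat.mul_le_mul_right _ (Subgroup.relIndex_le_of_le_right inf_le_left hKB)

/-- The commensurability class of the family `S`. -/
def cls (S : Set (Subgroup G)) : Set (Subgroup G) :=
  {K | ∃ F ∈ S, K.relIndex F ≠ 0 ∧ F.relIndex K ≠ 0}

/-- `aIdx S K` is the supremum of the indices `[K : K ⊓ F]` for `F ∈ S`. -/
noncomputable def aIdx (S : Set (Subgroup G)) (K : Subgroup G) : ℕ :=
  sSup ((fun F => F.relIndex K) '' S)

/-- The minimal value of `aIdx` on the commensurability class. -/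
noncomputable def dmin (S : Set (Subgroup G)) : ℕ :=
  sInf (aIdx S '' cls S)

/-- The set of subgroups in the class realizing the minimal value. -/
def Bset (S : Set (Subgroup G)) : Set (Subgroup G) :=
  {K | K ∈ cls S ∧ aIdx S K ≤ dmin S}

/-- The canonical subgroup attached to the family `S`. -/
noncomputable def Ncan (S : Set (Subgroup G)) : Subgroup G := sSup (Bset S)

section Family

variable {S : Set (Subgroup G)} {n : ℕ}
  (hb : ∀ F ∈ S, ∀ F' ∈ S, F'.relIndex F ≤ n ∧ F'.relIndex F ≠ 0)

theorem mem_cls_self {F : Subgroup G} (hF : F ∈ S) : F ∈ cls S :=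
  ⟨F, hF, by simp⟩

include hb in
theorem cls_all {K : Subgroup G} (hK : K ∈ cls S) :
    ∀ F ∈ S, K.relIndex F ≠ 0 ∧ F.relIndex K ≠ 0 := by
  obtain ⟨F', hF', h1, h2⟩ := hK
  intro F hF
  exact ⟨Subgroup.relIndex_ne_zero_trans h1 (hb F hF F' hF').2,
    Subgroup.relIndex_ne_zero_trans (hb F' hF' F hF).2 h2⟩

include hb in
theorem aIdx_bdd {K : Subgroup G} (hK : K ∈ cls S) :
    ∃ c, ∀ F ∈ S, F.relIndex K ≤ c := by
  obtain ⟨F', hF', h1, h2⟩ := hK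
  refine ⟨n * F'.relIndex K, fun F hF => ?_⟩
  calc F.relIndex K ≤ F.relIndex F' * F'.relIndex K :=
        (relindex_triangle h2 (hb F' hF' F hF).2).1
    _ ≤ n * F'.relIndex K := Nat.mul_le_mul_right _ (hb F' hF' F hF).1

include hb in
theorem bddAbove_aset {K : Subgroup G} (hK : K ∈ cls S) :
    BddAbove ((fun F => F.relIndex K) '' S) := by
  obtain ⟨c, hc⟩ := aIdx_bdd hb hK
  exact ⟨c, by rintro x ⟨F, hF, rfl⟩; exact hc F hF⟩

include hb in
theorem relindex_le_aIdx {K F : Subgroup G} (hK : K ∈ cls S) (hF : F ∈ S) :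
    F.relIndex K ≤ aIdx S K :=
  le_csSup (bddAbove_aset hb hK) (Set.mem_image_of_mem _ hF)

include hb in
theorem aIdx_ne_zero {K : Subgroup G} (hK : K ∈ cls S) : aIdx S K ≠ 0 := by
  obtain ⟨F', hF', h1, h2⟩ := id hK
  intro h
  exact h2 (Nat.le_zero.mp (h ▸ relindex_le_aIdx hb hK hF'))

theorem exists_dmin (hS : S.Nonempty) : ∃ K ∈ cls S, aIdx S K = dmin S := by
  obtain ⟨F, hF⟩ := id hS
  have hne : (aIdx S '' cls S).Nonempty :=
    ⟨_, Set.mem_image_of_mem _ (mem_cls_self hF)⟩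
  obtain ⟨K, hK, h⟩ := Nat.sInf_mem hne
  exact ⟨K, hK, h⟩

theorem dmin_le {K : Subgroup G} (hK : K ∈ cls S) : dmin S ≤ aIdx S K :=
  Nat.sInf_le (Set.mem_image_of_mem _ hK)

include hb in
theorem aIdx_mono (hS : S.Nonempty) {K' K : Subgroup G} (h : K' ≤ K) (hK : K ∈ cls S) :
    aIdx S K' ≤ aIdx S K := by
  apply csSup_le (hS.image _)
  rintro x ⟨F, hF, rfl⟩
  exact (Subgroup.relIndex_le_of_le_right h ((cls_all hb hK F hF).2)).trans
    (relindex_le_aIdx hb hK hF)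

include hb in
theorem cls_inf {K₁ K₂ : Subgroup G} (h1 : K₁ ∈ cls S) (h2 : K₂ ∈ cls S) :
    K₁ ⊓ K₂ ∈ cls S := by
  obtain ⟨F', hF', ha, hb'⟩ := h1
  refine ⟨F', hF', ?_, ?_⟩
  · exact Subgroup.relIndex_inf_ne_zero ha (cls_all hb h2 F' hF').1
  · refine Subgroup.relIndex_ne_zero_trans hb' ?_
    rw [Subgroup.relIndex_eq_one.mpr inf_le_left]
    exact one_ne_zero

include hb in
theorem Bset_inf (hS : S.Nonempty) {K₁ K₂ : Subgroup G} (h1 : K₁ ∈ Bset S) (h2 : K₂ ∈ Bset S) :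
    K₁ ⊓ K₂ ∈ Bset S := by
  have hc := cls_inf hb h1.1 h2.1
  exact ⟨hc, (aIdx_mono hb hS inf_le_left h1.1).trans h1.2⟩

theorem exists_mem_Bset (hS : S.Nonempty) : ∃ K, K ∈ Bset S := by
  obtain ⟨K, hK, h⟩ := exists_dmin hS
  exact ⟨K, hK, h.le⟩

theorem aIdx_eq_dmin {K : Subgroup G} (hK : K ∈ Bset S) : aIdx S K = dmin S :=
  le_antisymm hK.2 (dmin_le hK.1)

end Family



/-- The image of `K` in the coset space `G ⧸ F`. -/
def imgQ (F K : Subgroup G) : Set (G ⧸ F) := QuotientGroup.mk '' (K : Set G)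

theorem mem_imgQ {F K : Subgroup G} {x : G} (hx : x ∈ K) :
    (QuotientGroup.mk x : G ⧸ F) ∈ imgQ F K :=
  ⟨x, hx, rfl⟩

noncomputable def quotToImg (F K : Subgroup G) :
    (↥K ⧸ F.subgroupOf K) → ↥(imgQ F K) := fun q =>
  Quotient.liftOn' q (fun k => (⟨QuotientGroup.mk (k : G), mem_imgQ k.2⟩ : ↥(imgQ F K)))
    (by
      intro a b h
      rw [QuotientGroup.leftRel_apply] at h
      exact Subtype.ext (QuotientGroup.eq.mpr h))

theorem quotToImg_bijective (F K : Subgroup G) : Function.Bijective (quotToImg F K) := by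
  constructor
  · intro q q'
    refine Quotient.inductionOn₂' q q' ?_
    intro a b h
    have : (QuotientGroup.mk (a : G) : G ⧸ F) = QuotientGroup.mk (b : G) :=
      congrArg Subtype.val h
    rw [QuotientGroup.eq] at this
    refine Quotient.sound' ?_
    rw [QuotientGroup.leftRel_apply]
    exact this
  · rintro ⟨x, y, hy, rfl⟩
    exact ⟨Quotient.mk'' ⟨y, hy⟩, rfl⟩

theorem imgQ_card (F K : Subgroup G) : Nat.card ↥(imgQ F K) = F.relIndex K := by
  rw [Subgroup.relIndex, Subgroup.index, ← Nat.card_congr (Equiv.ofBijective _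
    (quotToImg_bijective F K))]

theorem imgQ_finite {F K : Subgroup G} (h : F.relIndex K ≠ 0) : (imgQ F K).Finite := by
  rw [← imgQ_card F K] at h
  exact Set.finite_coe_iff.mp (Nat.finite_of_card_ne_zero h)

theorem smul_imgQ {F K : Subgroup G} {k : G} (hk : k ∈ K) :
    k • imgQ F K = imgQ F K := by
  ext q
  constructor
  · rintro ⟨q', ⟨y, hy, rfl⟩, rfl⟩
    show k • (QuotientGroup.mk y : G ⧸ F) ∈ imgQ F K
    rw [MulAction.Quotient.smul_mk, smul_eq_mul]
    exact mem_imgQ (K.mul_mem hk hy)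
  · rintro ⟨y, hy, rfl⟩
    refine ⟨QuotientGroup.mk (k⁻¹ * y), mem_imgQ (K.mul_mem (K.inv_mem hk) hy), ?_⟩
    show k • (QuotientGroup.mk (k⁻¹ * y) : G ⧸ F) = QuotientGroup.mk y
    rw [MulAction.Quotient.smul_mk, smul_eq_mul, mul_inv_cancel_left]

section Key

variable {S : Set (Subgroup G)} {n : ℕ}
  (hb : ∀ F ∈ S, ∀ F' ∈ S, F'.relIndex F ≤ n ∧ F'.relIndex F ≠ 0)

include hb in
theorem Bset_finset_inf (hS : S.Nonempty) {t : Finset (Subgroup G)} (ht : ↑t ⊆ Bset S)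
    (htne : t.Nonempty) : t.inf id ∈ Bset S := by
  revert ht
  induction htne using Finset.Nonempty.cons_induction with
  | singleton a =>
      intro ht
      simpa using ht (Finset.mem_singleton_self a)
  | cons a s h hs ih =>
      intro ht
      rw [Finset.inf_cons]
      exact Bset_inf hb hS (ht (Finset.mem_cons_self a s))
        (ih fun x hx => ht (Finset.mem_cons.mpr (Or.inr hx)))

include hb in
theorem key_join (hS : S.Nonempty) {t : Finset (Subgroup G)} (ht : ↑t ⊆ Bset S)
    (htne : t.Nonempty) :
    ∀ F ∈ S, F.relIndex (t.sup id) ≤ n * dmin S ∧ F.relIndex (t.sup id) ≠ 0 := by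
  classical
  have hC₀ : t.inf id ∈ Bset S := Bset_finset_inf hb hS ht htne
  set C₀ := t.inf id with hC₀def
  have hCc : C₀ ∈ cls S := hC₀.1
  have hCd : aIdx S C₀ = dmin S := aIdx_eq_dmin hC₀
  have hdne : dmin S ≠ 0 := hCd ▸ aIdx_ne_zero hb hCc
  -- a tight group `F₁`
  obtain ⟨F₁, hF₁S, hF₁⟩ : ∃ F₁ ∈ S, F₁.relIndex C₀ = dmin S := by
    have hmem : aIdx S C₀ ∈ (fun F => F.relIndex C₀) '' S :=
      Nat.sSup_mem (hS.image _) (bddAbove_aset hb hCc)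
    rw [hCd] at hmem
    obtain ⟨F₁, hF₁S, h⟩ := hmem
    exact ⟨F₁, hF₁S, h⟩
  set Ω := imgQ F₁ C₀ with hΩdef
  have hΩcard : Nat.card ↥Ω = dmin S := (imgQ_card F₁ C₀).trans hF₁
  have hΩfin : Ω.Finite := imgQ_finite (hF₁ ▸ hdne)
  -- all members of `t` have the same image in `G ⧸ F₁`
  have himg : ∀ K ∈ t, imgQ F₁ K = Ω := by
    intro K hK
    have hKB : K ∈ Bset S := ht hK
    have hle : C₀ ≤ K := Finset.inf_le hK
    have h1 : Ω ⊆ imgQ F₁ K := Set.image_mono hle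
    have hfinK : (imgQ F₁ K).Finite := imgQ_finite (cls_all hb hKB.1 F₁ hF₁S).2
    refine (Set.eq_of_subset_of_ncard_le h1 ?_ hfinK).symm
    rw [← Nat.card_coe_set_eq, ← Nat.card_coe_set_eq, hΩcard, imgQ_card]
    exact (relindex_le_aIdx hb hKB.1 hF₁S).trans hKB.2
  -- the stabilizer of `Ω`
  set Stab := MulAction.stabilizer G Ω with hStabdef
  have hJS : t.sup id ≤ Stab := by
    refine Finset.sup_le ?_
    intro K hK
    intro k hk
    show k • Ω = Ω
    rw [← himg K hK]
    exact smul_imgQ hk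
  have hstab : F₁.relIndex Stab ≤ dmin S ∧ F₁.relIndex Stab ≠ 0 := by
    haveI := hΩfin.to_subtype
    set ψ : (↥Stab ⧸ F₁.subgroupOf Stab) → ↥Ω := fun q =>
      Quotient.liftOn' q
        (fun s => (⟨QuotientGroup.mk (s : G), by
          have h1 : (QuotientGroup.mk (1 : G) : G ⧸ F₁) ∈ Ω := mem_imgQ C₀.one_mem
          have h2 : (s : G) • (QuotientGroup.mk (1 : G) : G ⧸ F₁) ∈ (s : G) • Ω :=
            Set.smul_mem_smul_set h1
          have h3 : (s : G) • Ω = Ω := MulAction.mem_stabilizer_iff.mp s.2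
          rw [h3] at h2
          simpa [MulAction.Quotient.smul_mk] using h2⟩ : ↥Ω))
        (by
          intro a b hab
          rw [QuotientGroup.leftRel_apply] at hab
          have hab' := Subgroup.mem_subgroupOf.mp hab
          exact Subtype.ext (QuotientGroup.eq.mpr (by simpa using hab'))) with hψdef
    have hinj : Function.Injective ψ := by
      intro q q'
      refine Quotient.inductionOn₂' q q' ?_
      intro a b hfab
      have : (QuotientGroup.mk (a : G) : G ⧸ F₁) = QuotientGroup.mk (b : G) :=
        congrArg Subtype.val hfab
      rw [QuotientGroup.eq] at this
      refine Quotient.sound' ?_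
      rw [QuotientGroup.leftRel_apply]
      exact Subgroup.mem_subgroupOf.mpr (by simpa using this)
    constructor
    · have := Nat.card_le_card_of_injective ψ hinj
      rw [hΩcard] at this
      exact this
    · have hfin : Finite (↥Stab ⧸ F₁.subgroupOf Stab) := Finite.of_injective ψ hinj
      exact Nat.card_ne_zero.mpr ⟨⟨Quotient.mk'' 1⟩, hfin⟩
  have hJ : F₁.relIndex (t.sup id) ≤ dmin S ∧ F₁.relIndex (t.sup id) ≠ 0 := by
    refine ⟨(Subgroup.relIndex_le_of_le_right hJS hstab.2).trans hstab.1, ?_⟩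
    intro h
    exact hstab.2 (Subgroup.relIndex_eq_zero_of_le_right hJS h)
  intro F hF
  have htri := relindex_triangle hJ.2 (hb F₁ hF₁S F hF).2
  refine ⟨htri.1.trans ?_, htri.2⟩
  exact Nat.mul_le_mul (hb F₁ hF₁S F hF).1 hJ.1

include hb in
theorem relindex_Ncan (hS : S.Nonempty) :
    ∀ F ∈ S, F.relIndex (Ncan S) ≤ n * dmin S ∧ F.relIndex (Ncan S) ≠ 0 := by
  classical
  obtain ⟨K₀, hK₀⟩ := exists_mem_Bset hS
  set ι := {t : Finset (Subgroup G) // ↑t ⊆ Bset S ∧ t.Nonempty} with hιdef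
  haveI : Nonempty ι := ⟨⟨{K₀}, by simpa using hK₀, Finset.singleton_nonempty K₀⟩⟩
  set g : ι → Subgroup G := fun p => p.1.sup id with hgdef
  have hdir : Directed (· ≤ ·) g := by
    intro p q
    refine ⟨⟨p.1 ∪ q.1, ?_, Finset.Nonempty.inl p.2.2⟩, ?_, ?_⟩
    · intro K hK
      rcases Finset.mem_union.mp hK with h | h
      · exact p.2.1 h
      · exact q.2.1 h
    · exact Finset.sup_mono Finset.subset_union_left
    · exact Finset.sup_mono Finset.subset_union_right
  have hNg : Ncan S = ⨆ p, g p := by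
    apply le_antisymm
    · apply sSup_le
      intro K hK
      have : K = g ⟨{K}, by simpa using hK, Finset.singleton_nonempty K⟩ := by
        simp [hgdef]
      rw [this]
      exact le_iSup g _
    · apply iSup_le
      intro p
      apply Finset.sup_le
      intro K hK
      exact le_sSup (p.2.1 hK)
  intro F hF
  set m := n * dmin S with hmdef
  have claim : ∀ f : Fin (m + 1) → (↥(Ncan S) ⧸ F.subgroupOf (Ncan S)),
      ¬ Function.Injective f := by
    intro f hf
    have hx : ∀ i, ∃ p : ι, ((f i).out : G) ∈ g p := by
      intro i
      have hmem : ((f i).out : G) ∈ Ncan S := (f i).out.2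
      exact (Subgroup.mem_iSup_of_directed hdir).mp (hNg.le hmem)
    choose p hp using hx
    set T : Finset (Subgroup G) := Finset.univ.sup (fun i => (p i).1) with hTdef
    have hT : ↑T ⊆ Bset S := by
      intro K hK
      rw [Finset.mem_coe, Finset.mem_sup] at hK
      obtain ⟨i, _, hi⟩ := hK
      exact (p i).2.1 hi
    have hTle : ∀ i, (p i).1 ⊆ T := fun i =>
      Finset.le_sup (f := fun i => (p i).1) (Finset.mem_univ i)
    have hTne : T.Nonempty := by
      obtain ⟨K, hK⟩ := (p 0).2.2
      exact ⟨K, hTle 0 hK⟩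
    have hJle : ∀ i, g (p i) ≤ T.sup id := fun i => Finset.sup_mono (hTle i)
    have hbound := key_join hb hS hT hTne F hF
    haveI hfinJ : Finite (↥(T.sup id) ⧸ F.subgroupOf (T.sup id)) :=
      Nat.finite_of_card_ne_zero hbound.2
    set h : Fin (m + 1) → (↥(T.sup id) ⧸ F.subgroupOf (T.sup id)) := fun i =>
      QuotientGroup.mk ⟨((f i).out : G), hJle i (hp i)⟩ with hhdef
    have hinj : Function.Injective h := by
      intro i j hij
      apply hf
      have h1 := QuotientGroup.eq.mp hij
      have h2 : ((f i).out : G)⁻¹ * ((f j).out : G) ∈ F := by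
        simpa [Subgroup.mem_subgroupOf] using h1
      show f i = f j
      rw [← QuotientGroup.out_eq' (f i), ← QuotientGroup.out_eq' (f j)]
      exact QuotientGroup.eq.mpr (Subgroup.mem_subgroupOf.mpr (by simpa using h2))
    have hcard := Nat.card_le_card_of_injective h hinj
    have hcard2 : Nat.card (↥(T.sup id) ⧸ F.subgroupOf (T.sup id)) ≤ m := hbound.1
    rw [Nat.card_eq_fintype_card, Fintype.card_fin] at hcard
    omega
  have hfinQ : Finite (↥(Ncan S) ⧸ F.subgroupOf (Ncan S)) := by
    by_contra hinf
    rw [not_finite_iff_infinite] at hinf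
    exact claim (fun i => (Infinite.natEmbedding _) i)
      ((Infinite.natEmbedding _).injective.comp Fin.val_injective)
  constructor
  · by_contra hlt
    push_neg at hlt
    haveI := Fintype.ofFinite (↥(Ncan S) ⧸ F.subgroupOf (Ncan S))
    have hm1 : m + 1 ≤ Fintype.card (↥(Ncan S) ⧸ F.subgroupOf (Ncan S)) := by
      have : F.relIndex (Ncan S) = Fintype.card (↥(Ncan S) ⧸ F.subgroupOf (Ncan S)) := by
        rw [Subgroup.relIndex, Subgroup.index, Nat.card_eq_fintype_card]
      omega
    exact claim ((Fintype.equivFin _).symm ∘ Fin.castLE hm1)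
      ((Fintype.equivFin _).symm.injective.comp (Fin.castLE_injective hm1))
  · show Nat.card _ ≠ 0
    exact Nat.card_ne_zero.mpr ⟨⟨QuotientGroup.mk 1⟩, hfinQ⟩

include hb in
theorem Ncan_relindex (hS : S.Nonempty) :
    ∃ c, ∀ F ∈ S, (Ncan S).relIndex F ≤ c ∧ (Ncan S).relIndex F ≠ 0 := by
  obtain ⟨F₀, hF₀⟩ := hS
  obtain ⟨K₀, hK₀⟩ := exists_mem_Bset ⟨F₀, hF₀⟩
  have hK₀N : K₀ ≤ Ncan S := le_sSup hK₀
  refine ⟨K₀.relIndex F₀ * n, ?_⟩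
  intro F hF
  have h1 : K₀.relIndex F ≠ 0 := (cls_all hb hK₀.1 F hF).1
  have h2 : K₀.relIndex F₀ ≠ 0 := (cls_all hb hK₀.1 F₀ hF₀).1
  constructor
  · calc (Ncan S).relIndex F ≤ K₀.relIndex F :=
          Subgroup.relIndex_le_of_le_left hK₀N h1
      _ ≤ K₀.relIndex F₀ * F₀.relIndex F := (relindex_triangle (hb F hF F₀ hF₀).2 h2).1
      _ ≤ K₀.relIndex F₀ * n := Nat.mul_le_mul_left _ (hb F hF F₀ hF₀).1
  · intro h0
    exact h1 (Subgroup.relIndex_eq_zero_of_le_left hK₀N h0)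

end Key

section Transport

variable (σ : G ≃* G)

theorem relindex_map_eq (H K : Subgroup G) :
    (H.map σ.toMonoidHom).relIndex (K.map σ.toMonoidHom) = H.relIndex K := by
  have h := Subgroup.relIndex_comap (H := H.map σ.toMonoidHom) σ.toMonoidHom K
  rw [Subgroup.comap_map_eq_self_of_injective σ.injective] at h
  exact h.symm

theorem map_map_symm (K : Subgroup G) :
    (K.map σ.symm.toMonoidHom).map σ.toMonoidHom = K := by
  have h : σ.toMonoidHom.comp σ.symm.toMonoidHom = MonoidHom.id G := by
    ext x; simp
  rw [Subgroup.map_map, h, Subgroup.map_id]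

variable {S : Set (Subgroup G)}

theorem mem_cls_map_iff {K : Subgroup G} :
    K.map σ.toMonoidHom ∈ cls ((Subgroup.map σ.toMonoidHom) '' S) ↔ K ∈ cls S := by
  constructor
  · rintro ⟨F', ⟨F, hF, rfl⟩, h1, h2⟩
    rw [relindex_map_eq] at h1 h2
    exact ⟨F, hF, h1, h2⟩
  · rintro ⟨F, hF, h1, h2⟩
    refine ⟨F.map σ.toMonoidHom, ⟨F, hF, rfl⟩, ?_, ?_⟩
    · rwa [relindex_map_eq]
    · rwa [relindex_map_eq]

theorem aIdx_map_eq (K : Subgroup G) :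
    aIdx ((Subgroup.map σ.toMonoidHom) '' S) (K.map σ.toMonoidHom) = aIdx S K := by
  unfold aIdx
  congr 1
  rw [Set.image_image]
  apply Set.image_congr
  intro F _
  exact relindex_map_eq σ F K

theorem dmin_map_eq :
    dmin ((Subgroup.map σ.toMonoidHom) '' S) = dmin S := by
  unfold dmin
  congr 1
  ext x
  constructor
  · rintro ⟨K', hK', rfl⟩
    refine ⟨K'.map σ.symm.toMonoidHom, ?_, ?_⟩
    · rw [← map_map_symm σ K'] at hK'
      exact (mem_cls_map_iff σ).mp hK'
    · rw [← aIdx_map_eq σ (K'.map σ.symm.toMonoidHom), map_map_symm σ K']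
  · rintro ⟨K, hK, rfl⟩
    exact ⟨K.map σ.toMonoidHom, (mem_cls_map_iff σ).mpr hK, aIdx_map_eq σ K⟩

theorem mem_Bset_map_iff {K : Subgroup G} :
    K.map σ.toMonoidHom ∈ Bset ((Subgroup.map σ.toMonoidHom) '' S) ↔ K ∈ Bset S := by
  unfold Bset
  rw [Set.mem_setOf_eq, Set.mem_setOf_eq, mem_cls_map_iff σ, aIdx_map_eq σ, dmin_map_eq σ]

theorem Ncan_map_eq :
    Ncan ((Subgroup.map σ.toMonoidHom) '' S) = (Ncan S).map σ.toMonoidHom := by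
  unfold Ncan
  have h1 : Bset ((Subgroup.map σ.toMonoidHom) '' S)
      = (Subgroup.map σ.toMonoidHom) '' (Bset S) := by
    ext K'
    constructor
    · intro h
      refine ⟨K'.map σ.symm.toMonoidHom, ?_, map_map_symm σ K'⟩
      rw [← map_map_symm σ K'] at h
      exact (mem_Bset_map_iff σ).mp h
    · rintro ⟨K, hK, rfl⟩
      exact (mem_Bset_map_iff σ).mpr hK
  rw [h1, sSup_image]
  exact ((Subgroup.gc_map_comap σ.toMonoidHom).l_sSup).symm

variable {n : ℕ}
  (hb : ∀ F ∈ S, ∀ F' ∈ S, F'.relIndex F ≤ n ∧ F'.relIndex F ≠ 0)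

include hb in
theorem Ncan_le_map (hS : S.Nonempty)
    (hσ : (Subgroup.map σ.toMonoidHom) '' S ⊆ S) :
    Ncan S ≤ Ncan ((Subgroup.map σ.toMonoidHom) '' S) := by
  apply sSup_le_sSup
  intro K hK
  obtain ⟨F, hF⟩ := id hS
  have hFm : F.map σ.toMonoidHom ∈ S := hσ ⟨F, hF, rfl⟩
  constructor
  · exact ⟨F.map σ.toMonoidHom, ⟨F, hF, rfl⟩,
      (cls_all hb hK.1 _ hFm).1, (cls_all hb hK.1 _ hFm).2⟩
  · rw [dmin_map_eq σ]
    refine le_trans ?_ hK.2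
    apply csSup_le_csSup (bddAbove_aset hb hK.1) (((hS.image _)).image _)
    exact Set.image_mono hσ

end Transport

end SchlichtingAux

/-- Schlichting's theorem: if `𝔉` is a nonempty family of subgroups of `G` with
`[F : F ∩ F'] ≤ n` for all `F, F' ∈ 𝔉`, then there is a subgroup `N`
commensurable with every member of `𝔉`, with indices bounded independently of
the member, and invariant under every automorphism of `G` stabilizing `𝔉`. -/
theorem schlichting (G : Type*) [Group G] (𝔉 : Set (Subgroup G)) (h𝔉 : 𝔉.Nonempty)
    (n : ℕ)
    (hbd : ∀ F ∈ 𝔉, ∀ F' ∈ 𝔉, F'.relIndex F ≤ n ∧ F'.relIndex F ≠ 0) :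
    ∃ N : Subgroup G, ∃ m : ℕ,
      (∀ F ∈ 𝔉, F.relIndex N ≤ m ∧ F.relIndex N ≠ 0 ∧
        N.relIndex F ≤ m ∧ N.relIndex F ≠ 0) ∧
      (∀ σ : G ≃* G, (∀ F ∈ 𝔉, F.map σ.toMonoidHom ∈ 𝔉) →
        N.map σ.toMonoidHom = N) := by
  classical
  open SchlichtingAux in
  obtain ⟨F₀, hF₀⟩ := h𝔉
  have hS : 𝔉.Nonempty := ⟨F₀, hF₀⟩
  obtain ⟨c, hc⟩ := SchlichtingAux.Ncan_relindex hbd hS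
  have hA := SchlichtingAux.relindex_Ncan hbd hS
  refine ⟨SchlichtingAux.Ncan 𝔉, max (n * SchlichtingAux.dmin 𝔉) c, ?_, ?_⟩
  · intro F hF
    exact ⟨(hA F hF).1.trans (le_max_left _ _), (hA F hF).2,
      (hc F hF).1.trans (le_max_right _ _), (hc F hF).2⟩
  · intro σ hσ
    set M : Set (Subgroup G) → Set (Subgroup G) :=
      fun T => (Subgroup.map σ.toMonoidHom) '' T with hM
    set Sk : ℕ → Set (Subgroup G) := fun k => M^[k] 𝔉 with hSkdef
    have hSk0 : Sk 0 = 𝔉 := rfl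
    have hSksucc : ∀ k, Sk (k + 1) = M (Sk k) := fun k =>
      Function.iterate_succ_apply' M k 𝔉
    have hsub : ∀ k, Sk k ⊆ 𝔉 := by
      intro k; induction k with
      | zero => exact subset_rfl
      | succ k ih =>
          rw [hSksucc]
          rintro _ ⟨F, hF, rfl⟩
          exact hσ F (ih hF)
    have hSkne : ∀ k, (Sk k).Nonempty := by
      intro k; induction k with
      | zero => exact hS
      | succ k ih => rw [hSksucc]; exact ih.image _
    have hbk : ∀ k, ∀ F ∈ Sk k, ∀ F' ∈ Sk k, F'.relIndex F ≤ n ∧ F'.relIndex F ≠ 0 :=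
      fun k F hF F' hF' => hbd F (hsub k hF) F' (hsub k hF')
    have hmapsub : ∀ k, M (Sk k) ⊆ Sk k := by
      intro k; induction k with
      | zero =>
          rintro _ ⟨F, hF, rfl⟩
          exact hσ F hF
      | succ k ih =>
          rw [hSksucc]
          exact Set.image_mono ih
    have hdk : ∀ k, SchlichtingAux.dmin (Sk k) = SchlichtingAux.dmin 𝔉 := by
      intro k; induction k with
      | zero => rfl
      | succ k ih => rw [hSksucc, hM, SchlichtingAux.dmin_map_eq σ]; exact ih
    have hNsucc : ∀ k, SchlichtingAux.Ncan (Sk (k + 1))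
        = (SchlichtingAux.Ncan (Sk k)).map σ.toMonoidHom := by
      intro k; rw [hSksucc]; exact SchlichtingAux.Ncan_map_eq σ
    have hmono : ∀ k, SchlichtingAux.Ncan (Sk k) ≤ SchlichtingAux.Ncan (Sk (k + 1)) := by
      intro k
      rw [hSksucc]
      exact SchlichtingAux.Ncan_le_map σ (hbk k) (hSkne k) (hmapsub k)
    have hchain : ∀ k, SchlichtingAux.Ncan 𝔉 ≤ SchlichtingAux.Ncan (Sk k) := by
      intro k; induction k with
      | zero => exact le_rfl
      | succ k ih => exact ih.trans (hmono k)
    set t := (SchlichtingAux.Ncan 𝔉).relIndex (SchlichtingAux.Ncan (Sk 1)) with htdef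
    have hstep : ∀ k,
        (SchlichtingAux.Ncan (Sk k)).relIndex (SchlichtingAux.Ncan (Sk (k + 1))) = t := by
      intro k; induction k with
      | zero => rfl
      | succ k ih =>
          rw [hNsucc k, hNsucc (k + 1), SchlichtingAux.relindex_map_eq σ]
          exact ih
    have hpow : ∀ k,
        (SchlichtingAux.Ncan 𝔉).relIndex (SchlichtingAux.Ncan (Sk k)) = t ^ k := by
      intro k; induction k with
      | zero =>
          rw [pow_zero, hSk0]
          exact Subgroup.relIndex_self _
      | succ k ih =>
          rw [← Subgroup.relIndex_mul_relIndex _ _ _ (hchain k) (hmono k), ih, hstep k,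
            pow_succ]
    set Fk : ℕ → Subgroup G := fun k => (fun K => K.map σ.toMonoidHom)^[k] F₀ with hFkdef
    have hFksucc : ∀ k, Fk (k + 1) = (Fk k).map σ.toMonoidHom := fun k =>
      Function.iterate_succ_apply' _ k F₀
    have hFkmem : ∀ k, Fk k ∈ Sk k := by
      intro k; induction k with
      | zero => exact hF₀
      | succ k ih =>
          rw [hFksucc, hSksucc]
          exact ⟨Fk k, ih, rfl⟩
    have hFk𝔉 : ∀ k, Fk k ∈ 𝔉 := fun k => hsub k (hFkmem k)
    have hF₀N : ∀ k, F₀.relIndex (SchlichtingAux.Ncan (Sk k))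
        ≤ n * (n * SchlichtingAux.dmin 𝔉)
        ∧ F₀.relIndex (SchlichtingAux.Ncan (Sk k)) ≠ 0 := by
      intro k
      have hAk := SchlichtingAux.relindex_Ncan (hbk k) (hSkne k) (Fk k) (hFkmem k)
      rw [hdk k] at hAk
      have htri := SchlichtingAux.relindex_triangle hAk.2 (hbd (Fk k) (hFk𝔉 k) F₀ hF₀).2
      exact ⟨htri.1.trans (Nat.mul_le_mul (hbd (Fk k) (hFk𝔉 k) F₀ hF₀).1 hAk.1), htri.2⟩
    have hcN := hc F₀ hF₀
    have hbnd : ∀ k, t ^ k ≤ c * (n * (n * SchlichtingAux.dmin 𝔉)) := by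
      intro k
      rw [← hpow k]
      have htri := SchlichtingAux.relindex_triangle (hF₀N k).2 hcN.2
      exact htri.1.trans (Nat.mul_le_mul hcN.1 (hF₀N k).1)
    have ht0 : t ≠ 0 := by
      intro h0
      have hp1 := hpow 1
      rw [h0] at hp1
      have htri := SchlichtingAux.relindex_triangle (hF₀N 1).2 hcN.2
      rw [hp1] at htri
      simp at htri
    have ht1 : t = 1 := by
      by_contra h1
      have h2 : 2 ≤ t := by omega
      set B := c * (n * (n * SchlichtingAux.dmin 𝔉)) with hB
      have hBB := hbnd B
      have h3 : 2 ^ B ≤ t ^ B := Nat.pow_le_pow_left h2 B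
      have h4 : B < 2 ^ B := Nat.lt_two_pow_self
      omega
    have hle : SchlichtingAux.Ncan 𝔉 ≤ (SchlichtingAux.Ncan 𝔉).map σ.toMonoidHom := by
      have h := hmono 0
      rw [hNsucc 0, hSk0] at h
      exact h
    have heq1 : (SchlichtingAux.Ncan 𝔉).relIndex
        ((SchlichtingAux.Ncan 𝔉).map σ.toMonoidHom) = 1 := by
      have h := hpow 1
      rw [hNsucc 0, hSk0] at h
      rw [h, ht1, pow_one]
    exact le_antisymm (Subgroup.relIndex_eq_one.mp heq1) hle
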